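/- Let k ≥ 1 be an integer, set θ = (π/2)·3^{−k} and N_k = ⌈3^k/2⌉, let e_i = (cos(2(i−1)θ), sin(2(i−1)θ)) ∈ S¹ for i = 1, …, N_k, and let C = ⋃_{i=1}^{N_k} {x ∈ S¹ : d(x, e_i) < θ/2}. Then μ(C) ≥ 1/8, and C avoids every distance of the form (2l+1)·θ with 0 ≤ l ≤ N_k − 1; in particular C avoids all the distances 3^j·θ = (π/2)·3^{j−k} for j = 0, 1, …, k. -/

import Mathlib

open MeasureTheory Filter Set Real
open scoped RealInnerProductSpace ENNReal

noncomputable def ptc (t : ℝ) : EuclideanSpace ℝ (Fin 2) :=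
  (WithLp.equiv 2 (Fin 2 → ℝ)).symm ![Real.cos t, Real.sin t]

lemma ptc_zero (t : ℝ) : ptc t 0 = Real.cos t := by simp [ptc]
lemma ptc_one (t : ℝ) : ptc t 1 = Real.sin t := by simp [ptc]

lemma ptc_mem_sphere (t : ℝ) : ptc t ∈ Metric.sphere (0 : EuclideanSpace ℝ (Fin 2)) 1 := by
  simp only [Metric.mem_sphere, dist_zero_right, EuclideanSpace.norm_eq]
  rw [Fin.sum_univ_two, ptc_zero, ptc_one]
  simp [Real.sin_sq_add_cos_sq, Real.cos_sq_add_sin_sq]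

lemma inner_ptc (s t : ℝ) : ⟪ptc s, ptc t⟫ = Real.cos (s - t) := by
  rw [PiLp.inner_apply, Fin.sum_univ_two, ptc_zero, ptc_one, ptc_zero, ptc_one]
  simp [Real.cos_sub, mul_comm]

lemma ptc_periodic (t : ℝ) (n : ℤ) : ptc (t + 2 * π * n) = ptc t := by
  unfold ptc
  have h1 : t + 2 * π * n = t + n * (2 * π) := by ring
  rw [h1]
  congr 1
  rw [Real.cos_add_int_mul_two_pi, Real.sin_add_int_mul_two_pi]

noncomputable def rotL (α : ℝ) : EuclideanSpace ℝ (Fin 2) →ₗ[ℝ] EuclideanSpace ℝ (Fin 2) where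
  toFun x := (WithLp.equiv 2 (Fin 2 → ℝ)).symm
    ![Real.cos α * x 0 - Real.sin α * x 1, Real.sin α * x 0 + Real.cos α * x 1]
  map_add' x y := by
    apply (WithLp.equiv 2 (Fin 2 → ℝ)).injective
    ext i
    fin_cases i <;> simp [PiLp.add_apply] <;> ring
  map_smul' c x := by
    apply (WithLp.equiv 2 (Fin 2 → ℝ)).injective
    ext i
    fin_cases i <;> simp [PiLp.smul_apply, smul_eq_mul] <;> ring

lemma rotL_zero (α : ℝ) (x : EuclideanSpace ℝ (Fin 2)) :
    rotL α x 0 = Real.cos α * x 0 - Real.sin α * x 1 := by simp [rotL]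
lemma rotL_one (α : ℝ) (x : EuclideanSpace ℝ (Fin 2)) :
    rotL α x 1 = Real.sin α * x 0 + Real.cos α * x 1 := by simp [rotL]

lemma euclid_ext {x y : EuclideanSpace ℝ (Fin 2)} (h0 : x 0 = y 0) (h1 : x 1 = y 1) : x = y := by
  apply (WithLp.equiv 2 (Fin 2 → ℝ)).injective
  ext i
  fin_cases i <;> assumption

lemma rotL_rotL (α β : ℝ) (x : EuclideanSpace ℝ (Fin 2)) :
    rotL α (rotL β x) = rotL (α + β) x := by
  apply euclid_ext <;>
    simp only [rotL_zero, rotL_one, Real.cos_add, Real.sin_add] <;> ring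

lemma rotL_inv (α : ℝ) (x : EuclideanSpace ℝ (Fin 2)) : rotL α (rotL (-α) x) = x := by
  rw [rotL_rotL]
  apply euclid_ext <;> simp [rotL_zero, rotL_one]

noncomputable def rotE (α : ℝ) :
    EuclideanSpace ℝ (Fin 2) ≃ₗᵢ[ℝ] EuclideanSpace ℝ (Fin 2) where
  toLinearEquiv := LinearEquiv.ofLinear (rotL α) (rotL (-α))
    (LinearMap.ext fun x => rotL_inv α x)
    (LinearMap.ext fun x => by rw [LinearMap.comp_apply, rotL_rotL]; apply euclid_ext <;> simp [rotL_zero, rotL_one])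
  norm_map' x := by
    show ‖rotL α x‖ = ‖x‖
    rw [EuclideanSpace.norm_eq, EuclideanSpace.norm_eq, Fin.sum_univ_two, Fin.sum_univ_two,
      rotL_zero, rotL_one]
    congr 1
    simp only [Real.norm_eq_abs, sq_abs]
    have h := Real.sin_sq_add_cos_sq α
    nlinarith [h]

lemma rotE_apply (α : ℝ) (x : EuclideanSpace ℝ (Fin 2)) : rotE α x = rotL α x := rfl

lemma rotE_ptc (α t : ℝ) : rotE α (ptc t) = ptc (t + α) := by
  rw [rotE_apply]
  apply euclid_ext <;>
    simp only [rotL_zero, rotL_one, ptc_zero, ptc_one, Real.cos_add, Real.sin_add] <;> ring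

lemma rotE_rotE (α β : ℝ) (x : EuclideanSpace ℝ (Fin 2)) :
    rotE α (rotE β x) = rotE (α + β) x := rotL_rotL α β x

lemma rotE_zero_apply (x : EuclideanSpace ℝ (Fin 2)) : rotE 0 x = x := by
  rw [rotE_apply]; apply euclid_ext <;> simp [rotL_zero, rotL_one]

lemma rotE_cancel (α : ℝ) (x : EuclideanSpace ℝ (Fin 2)) : rotE (-α) (rotE α x) = x := by
  rw [rotE_rotE, neg_add_cancel, rotE_zero_apply]

lemma ptc_eq_iff {a b : ℝ} (h : ptc a = ptc b) : ∃ n : ℤ, a - b = 2 * π * n := by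
  have h0 : Real.cos a = Real.cos b := by
    rw [← ptc_zero a, ← ptc_zero b, h]
  have h1 : Real.sin a = Real.sin b := by
    rw [← ptc_one a, ← ptc_one b, h]
  exact Real.Angle.angle_eq_iff_two_pi_dvd_sub.mp (Real.Angle.cos_sin_inj h0 h1)

lemma ptc_nat_inj {t : ℝ} {n m : ℕ} (h : ptc (t + n) = ptc (t + m)) : n = m := by
  obtain ⟨c, hc⟩ := ptc_eq_iff h
  have hc' : ((n : ℤ) - m : ℤ) = (2 * c) * π := by
    push_cast
    push_cast at hc
    nlinarith [hc]
  by_contra hne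
  rcases eq_or_ne c 0 with rfl | hcne
  · have h2 : ((n : ℝ)) = m := by
      push_cast at hc'
      linarith
    exact hne (by exact_mod_cast h2)
  · have hirr : Irrational ((2 * c : ℤ) * π) :=
      irrational_pi.intCast_mul (by omega)
    exact hirr.ne_int ((n : ℤ) - m) (by push_cast; push_cast at hc'; linarith)

lemma null_pt (μ : Measure (EuclideanSpace ℝ (Fin 2)))
    (hprob : IsProbabilityMeasure μ)
    (hinv : ∀ f : EuclideanSpace ℝ (Fin 2) ≃ₗᵢ[ℝ] EuclideanSpace ℝ (Fin 2), μ.map f = μ)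
    (t : ℝ) : μ {ptc t} = 0 := by
  have key : ∀ n : ℕ, μ {ptc (t + n)} = μ {ptc t} := by
    intro n
    have hmap := hinv (rotE n)
    have hpre : (rotE (n : ℝ)) ⁻¹' {ptc (t + n)} = {ptc t} := by
      ext y
      simp only [Set.mem_preimage, Set.mem_singleton_iff]
      constructor
      · intro hy
        have := congrArg (rotE (-(n : ℝ))) hy
        rwa [rotE_cancel, rotE_ptc, add_neg_cancel_right] at this
      · rintro rfl
        rw [rotE_ptc]
    have := Measure.map_apply (rotE (n : ℝ)).continuous.measurable
      (measurableSet_singleton (ptc (t + n))) (μ := μ)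
    rw [hmap, hpre] at this
    exact this
  have hle : ∀ N : ℕ, (N : ℝ≥0∞) * μ {ptc t} ≤ 1 := by
    intro N
    have hsum : ∑ n ∈ Finset.range N, μ {ptc (t + n)} = (N : ℝ≥0∞) * μ {ptc t} := by
      simp [key, Finset.sum_const]
    have hdisj : (↑(Finset.range N) : Set ℕ).PairwiseDisjoint
        (fun n : ℕ => ({ptc (t + n)} : Set (EuclideanSpace ℝ (Fin 2)))) := by
      intro a _ b _ hab
      simp only [Set.disjoint_singleton, Function.onFun]
      intro hEq
      exact hab (ptc_nat_inj hEq)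
    have := measure_biUnion_finset hdisj
      (fun b _ => measurableSet_singleton _) (μ := μ)
    rw [hsum] at this
    rw [← this]
    exact (measure_mono (Set.subset_univ _)).trans (by simp)
  by_contra h
  obtain ⟨n, hn⟩ := ENNReal.exists_nat_mul_gt h (by simp : (1 : ℝ≥0∞) ≠ ⊤)
  exact absurd (hle n) (not_le.2 hn)

lemma exists_eps {u r : ℝ} (h : Real.arccos (Real.cos u) < r) :
    ∃ ε : ℝ, |ε| < r ∧ Real.cos ε = Real.cos u ∧ Real.sin ε = Real.sin u := by
  set v := Real.arccos (Real.cos u) with hv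
  have hv0 : 0 ≤ v := Real.arccos_nonneg _
  have hcv : Real.cos v = Real.cos u :=
    Real.cos_arccos (Real.neg_one_le_cos u) (Real.cos_le_one u)
  have hsq : Real.sin u ^ 2 = Real.sin v ^ 2 := by
    have h1 := Real.sin_sq_add_cos_sq u
    have h2 := Real.sin_sq_add_cos_sq v
    rw [hcv] at h2
    linarith
  have habs : |Real.sin u| = |Real.sin v| := by
    rw [← Real.sqrt_sq_eq_abs, ← Real.sqrt_sq_eq_abs, hsq]
  rcases abs_eq_abs.mp habs with heq | heq
  · exact ⟨v, by rwa [abs_of_nonneg hv0], hcv, heq.symm⟩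
  · refine ⟨-v, by rwa [abs_neg, abs_of_nonneg hv0], by rwa [Real.cos_neg], ?_⟩
    rw [Real.sin_neg]
    linarith [heq]

lemma ptc_shift {φ d ε : ℝ} (hcos : Real.cos ε = Real.cos d)
    (hsin : Real.sin ε = Real.sin d) : ptc (φ + d) = ptc (φ + ε) := by
  apply euclid_ext <;>
    simp [ptc_zero, ptc_one, Real.cos_add, Real.sin_add, hcos, hsin]

lemma sphere_rep {x : EuclideanSpace ℝ (Fin 2)}
    (hx : x ∈ Metric.sphere (0 : EuclideanSpace ℝ (Fin 2)) 1) : ∃ t, x = ptc t := by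
  have hnorm : ‖x‖ = 1 := by simpa using hx
  have hsum : x 0 ^ 2 + x 1 ^ 2 = 1 := by
    rw [EuclideanSpace.norm_eq, Fin.sum_univ_two] at hnorm
    have := congrArg (· ^ 2) hnorm
    simp only [one_pow] at this
    rw [Real.sq_sqrt (by positivity)] at this
    simpa [Real.norm_eq_abs, sq_abs] using this
  have hx0 : -1 ≤ x 0 ∧ x 0 ≤ 1 := by constructor <;> nlinarith [sq_nonneg (x 1)]
  refine ⟨if 0 ≤ x 1 then Real.arccos (x 0) else -Real.arccos (x 0), ?_⟩
  have hcos : Real.cos (if 0 ≤ x 1 then Real.arccos (x 0) else -Real.arccos (x 0)) = x 0 := by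
    split <;> simp [Real.cos_arccos hx0.1 hx0.2]
  have hxx : Real.sin (Real.arccos (x 0)) = |x 1| := by
    rw [Real.sin_arccos]
    have : 1 - x 0 ^ 2 = x 1 ^ 2 := by linarith
    rw [this, Real.sqrt_sq_eq_abs]
  have hsin : Real.sin (if 0 ≤ x 1 then Real.arccos (x 0) else -Real.arccos (x 0)) = x 1 := by
    split_ifs with hpos
    · rw [hxx, abs_of_nonneg hpos]
    · rw [Real.sin_neg, hxx, abs_of_neg (lt_of_not_ge hpos), neg_neg]
  exact euclid_ext (by rw [ptc_zero, hcos]) (by rw [ptc_one, hsin]) |>.symm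

lemma odd_ne_aux {θ : ℝ} (hθ : 0 < θ) {z : ℤ} (hz : Odd z) (h : |(z : ℝ) * θ| < θ) :
    False := by
  have h1 : |(z : ℝ)| * θ < 1 * θ := by
    rw [abs_mul, abs_of_pos hθ] at h
    simpa using h
  have h2 : |(z : ℝ)| < 1 := lt_of_mul_lt_mul_right h1 hθ.le
  have h3 : |z| < 1 := by exact_mod_cast h2
  rw [abs_lt] at h3
  obtain ⟨m, hm⟩ := hz
  omega

theorem circle_arc_construction
    (μ : Measure (EuclideanSpace ℝ (Fin 2)))
    (hprob : IsProbabilityMeasure μ)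
    (hsupp : μ (Metric.sphere (0 : EuclideanSpace ℝ (Fin 2)) 1)ᶜ = 0)
    (hinv : ∀ f : EuclideanSpace ℝ (Fin 2) ≃ₗᵢ[ℝ] EuclideanSpace ℝ (Fin 2),
      μ.map f = μ)
    (k : ℕ) (hk : 1 ≤ k)
    (θ : ℝ) (hθ : θ = (π / 2) * 3 ^ (-(k : ℤ)))
    (Nk : ℕ) (hNk : Nk = ⌈(3 : ℝ) ^ k / 2⌉₊)
    (e : ℕ → EuclideanSpace ℝ (Fin 2))
    (he : ∀ i, e i = (WithLp.equiv 2 (Fin 2 → ℝ)).symm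
      ![Real.cos (2 * ((i : ℝ) - 1) * θ), Real.sin (2 * ((i : ℝ) - 1) * θ)])
    (C : Set (EuclideanSpace ℝ (Fin 2)))
    (hC : C = ⋃ i ∈ Finset.Icc 1 Nk,
      {x ∈ Metric.sphere (0 : EuclideanSpace ℝ (Fin 2)) 1 |
        Real.arccos ⟪x, e i⟫ < θ / 2}) :
    (1 / 8 : ℝ≥0∞) ≤ μ C ∧
      (∀ x ∈ C, ∀ y ∈ C, ∀ l : ℕ, l ≤ Nk - 1 →
        Real.arccos ⟪x, y⟫ ≠ (2 * (l : ℝ) + 1) * θ) ∧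
      (∀ x ∈ C, ∀ y ∈ C, ∀ j : ℕ, j ≤ k →
        Real.arccos ⟪x, y⟫ ≠ 3 ^ j * θ) := by
  have hθpos : 0 < θ := by
    rw [hθ]
    positivity
  set P : ℕ := 3 ^ k with hPdef
  have hPpos : 0 < P := pow_pos (by norm_num) k
  have hPθ : (P : ℝ) * θ = π / 2 := by
    have h3 : ((P : ℕ) : ℝ) = (3 : ℝ) ^ k := by rw [hPdef]; push_cast; ring
    rw [hθ, zpow_neg, zpow_natCast, h3]
    field_simp
  have hP1 : (1 : ℝ) ≤ (P : ℝ) := by exact_mod_cast hPpos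
  have hθhalf : θ ≤ π / 2 := by nlinarith
  have hθpi : θ / 2 ≤ π := by linarith [Real.pi_pos]
  have hNk2 : 2 * Nk = P + 1 := by
    have hodd : Odd P := Odd.pow (⟨1, rfl⟩ : Odd 3)
    obtain ⟨m, hm⟩ := hodd
    have h1 : Nk ≤ m + 1 := by
      rw [hNk]
      apply Nat.ceil_le.mpr
      have : ((3 : ℝ) ^ k) = (P : ℝ) := by push_cast [hPdef]; ring
      rw [this]
      have : (P : ℝ) = 2 * m + 1 := by exact_mod_cast hm
      rw [this]
      push_cast
      linarith
    have h2 : m + 1 ≤ Nk := by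
      rw [hNk]
      apply Nat.lt_ceil.mpr
      have h3 : ((3 : ℝ) ^ k) = (P : ℝ) := by push_cast [hPdef]; ring
      rw [h3]
      have : (P : ℝ) = 2 * m + 1 := by exact_mod_cast hm
      rw [this]
      push_cast
      linarith
    omega
  have hei : ∀ i : ℕ, e i = ptc (2 * ((i : ℝ) - 1) * θ) := fun i => he i
  -- membership characterization
  have hmem : ∀ x, x ∈ C ↔ ∃ i, (1 ≤ i ∧ i ≤ Nk) ∧
      ∃ ε : ℝ, |ε| < θ / 2 ∧ x = ptc (2 * ((i : ℝ) - 1) * θ + ε) := by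
    intro x
    rw [hC]
    simp only [Set.mem_iUnion, Finset.mem_Icc, Set.mem_setOf_eq, exists_prop]
    constructor
    · rintro ⟨i, hi, hxs, harc⟩
      obtain ⟨t, rfl⟩ := sphere_rep hxs
      rw [hei i, inner_ptc] at harc
      obtain ⟨ε, hε, hcos, hsin⟩ := exists_eps harc
      refine ⟨i, hi, ε, hε, ?_⟩
      have h5 : 2 * ((i : ℝ) - 1) * θ + (t - 2 * ((i : ℝ) - 1) * θ) = t := by ring
      rw [← h5]
      exact ptc_shift hcos hsin
    · rintro ⟨i, hi, ε, hε, rfl⟩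
      refine ⟨i, hi, ptc_mem_sphere _, ?_⟩
      rw [hei i, inner_ptc]
      have harg : 2 * ((i : ℝ) - 1) * θ + ε - 2 * ((i : ℝ) - 1) * θ = ε := by ring
      rw [harg, ← Real.cos_abs, Real.arccos_cos (abs_nonneg ε) (le_trans hε.le (by linarith))]
      exact hε
  -- avoidance of odd multiples of θ
  have havoid : ∀ x ∈ C, ∀ y ∈ C, ∀ q : ℕ, Odd q → Real.arccos ⟪x, y⟫ ≠ (q : ℝ) * θ := by
    intro x hx y hy q hq habs
    obtain ⟨i, hi, ε, hε, rfl⟩ := (hmem x).mp hx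
    obtain ⟨j, hj, δ, hδ, rfl⟩ := (hmem y).mp hy
    rw [inner_ptc] at habs
    have hDval : (2 * ((i : ℝ) - 1) * θ + ε) - (2 * ((j : ℝ) - 1) * θ + δ)
        = 2 * ((i : ℝ) - (j : ℝ)) * θ + (ε - δ) := by ring
    rw [hDval] at habs
    obtain ⟨D, hD⟩ : ∃ D : ℝ, D = 2 * ((i : ℝ) - (j : ℝ)) * θ + (ε - δ) := ⟨_, rfl⟩
    rw [← hD] at habs
    have hiN : (i : ℝ) ≤ Nk := by exact_mod_cast hi.2
    have hjN : (j : ℝ) ≤ Nk := by exact_mod_cast hj.2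
    have hi1 : (1 : ℝ) ≤ (i : ℝ) := by exact_mod_cast hi.1
    have hj1 : (1 : ℝ) ≤ (j : ℝ) := by exact_mod_cast hj.1
    have hijabs : |(i : ℝ) - (j : ℝ)| ≤ (Nk : ℝ) - 1 := abs_le.mpr ⟨by linarith, by linarith⟩
    have hεδ : |ε - δ| < θ := by
      calc |ε - δ| = |ε + -δ| := by ring_nf
        _ ≤ |ε| + |(-δ)| := abs_add_le _ _
        _ = |ε| + |δ| := by rw [abs_neg]
        _ < θ := by linarith
    have hNkR : 2 * (Nk : ℝ) = (P : ℝ) + 1 := by exact_mod_cast hNk2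
    have hDabs : |D| < π / 2 := by
      have h1 : |2 * ((i : ℝ) - (j : ℝ)) * θ| ≤ 2 * ((Nk : ℝ) - 1) * θ := by
        rw [abs_mul, abs_of_pos hθpos, abs_mul, abs_two]
        have := mul_le_mul_of_nonneg_left hijabs (by norm_num : (0:ℝ) ≤ 2)
        exact mul_le_mul_of_nonneg_right this hθpos.le
      have h2 : |D| ≤ |2 * ((i : ℝ) - (j : ℝ)) * θ| + |ε - δ| := by
        rw [hD]; exact abs_add_le _ _
      have h3 : 2 * ((Nk : ℝ) - 1) * θ + θ = π / 2 := by
        linear_combination θ * hNkR + hPθ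
      linarith
    have harcD : Real.arccos (Real.cos D) = |D| := by
      rw [← Real.cos_abs, Real.arccos_cos (abs_nonneg _) (by linarith [Real.pi_pos])]
    rw [harcD] at habs
    rcases (abs_eq (by positivity : (0:ℝ) ≤ (q : ℝ) * θ)).mp habs with hcase | hcase
    · refine odd_ne_aux hθpos (z := (q : ℤ) - 2 * ((i : ℤ) - (j : ℤ))) ?_ ?_
      · obtain ⟨m, hm⟩ := hq
        exact ⟨m - ((i : ℤ) - (j : ℤ)), by omega⟩
      · have hzv : (((q : ℤ) - 2 * ((i : ℤ) - (j : ℤ)) : ℤ) : ℝ) * θ = ε - δ := by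
          push_cast
          linear_combination hD - hcase
        rw [hzv]
        exact hεδ
    · refine odd_ne_aux hθpos (z := (q : ℤ) + 2 * ((i : ℤ) - (j : ℤ))) ?_ ?_
      · obtain ⟨m, hm⟩ := hq
        exact ⟨m + ((i : ℤ) - (j : ℤ)), by omega⟩
      · have hzv : (((q : ℤ) + 2 * ((i : ℤ) - (j : ℤ)) : ℤ) : ℝ) * θ = -(ε - δ) := by
          push_cast
          linear_combination hcase - hD
        rw [hzv, abs_neg]
        exact hεδ
  -- the measure bound
  set M : ℕ := 4 * P with hMdef
  have hMpos : 0 < M := by positivity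
  have hMθ : (M : ℝ) * θ = 2 * π := by
    have : ((M : ℕ) : ℝ) = 4 * (P : ℝ) := by rw [hMdef]; push_cast; ring
    rw [this]
    linear_combination 4 * hPθ
  have hCmeas : MeasurableSet C := by
    rw [hC]
    refine MeasurableSet.biUnion (Set.to_countable _) (fun i _ => ?_)
    have : {x ∈ Metric.sphere (0 : EuclideanSpace ℝ (Fin 2)) 1 |
        Real.arccos ⟪x, e i⟫ < θ / 2} =
        Metric.sphere (0 : EuclideanSpace ℝ (Fin 2)) 1 ∩
          {x | Real.arccos ⟪x, e i⟫ < θ / 2} := rfl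
    rw [this]
    refine (Metric.isClosed_sphere.measurableSet).inter ?_
    have hcont : Continuous fun x : EuclideanSpace ℝ (Fin 2) => Real.arccos ⟪x, e i⟫ :=
      Real.continuous_arccos.comp (continuous_id.inner continuous_const)
    exact (isOpen_lt hcont continuous_const).measurableSet
  have hrot : ∀ α : ℝ, μ (rotE α '' C) = μ C := by
    intro α
    have himg : rotE α '' C = rotE (-α) ⁻¹' C := by
      ext y
      constructor
      · rintro ⟨x, hx, rfl⟩
        simpa [Set.mem_preimage, rotE_cancel] using hx
      · intro hy
        exact ⟨rotE (-α) y, hy, by rw [rotE_rotE, add_neg_cancel, rotE_zero_apply]⟩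
    rw [himg]
    have h2 := Measure.map_apply (μ := μ) (rotE (-α)).continuous.measurable hCmeas
    rw [hinv (rotE (-α))] at h2
    exact h2.symm
  -- covering lemma
  have hcover : ∀ t : ℝ, (∃ m : ℕ, m < M ∧ ptc t = ptc (θ / 2 + (m : ℝ) * θ)) ∨
      (∃ a : ℕ, a < 2 ∧ ∃ b : ℕ, b < 4 ∧
        ptc t ∈ rotE ((a : ℝ) * θ + (b : ℝ) * (π / 2)) '' C) := by
    intro t
    obtain ⟨m0, hm0⟩ : ∃ m0 : ℤ, m0 = ⌊t / θ + 1 / 2⌋ := ⟨_, rfl⟩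
    have hf1 : (m0 : ℝ) ≤ t / θ + 1 / 2 := hm0 ▸ Int.floor_le _
    have hf2 : t / θ + 1 / 2 < m0 + 1 := hm0 ▸ Int.lt_floor_add_one _
    have htθ : t / θ * θ = t := div_mul_cancel₀ t hθpos.ne'
    have hε1 : -(θ / 2) ≤ t - (m0 : ℝ) * θ := by
      have h1 : ((m0 : ℝ) - 1 / 2) * θ ≤ t / θ * θ :=
        mul_le_mul_of_nonneg_right (by linarith) hθpos.le
      rw [htθ] at h1
      nlinarith
    have hε2 : t - (m0 : ℝ) * θ < θ / 2 := by
      have h1 : t / θ * θ < ((m0 : ℝ) + 1 / 2) * θ :=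
        mul_lt_mul_of_pos_right (by linarith) hθpos
      rw [htθ] at h1
      nlinarith
    by_cases hedge : t - (m0 : ℝ) * θ = -(θ / 2)
    · left
      have hdiv := Int.mul_ediv_add_emod (m0 - 1) (M : ℤ)
      have hr0 : 0 ≤ (m0 - 1) % (M : ℤ) := Int.emod_nonneg _ (by exact_mod_cast hMpos.ne')
      have hrM : (m0 - 1) % (M : ℤ) < (M : ℤ) := Int.emod_lt_of_pos _ (by exact_mod_cast hMpos)
      refine ⟨((m0 - 1) % (M : ℤ)).toNat, by omega, ?_⟩
      have hrr : ((((m0 - 1) % (M : ℤ)).toNat : ℕ) : ℝ) = (((m0 - 1) % (M : ℤ) : ℤ) : ℝ) := by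
        exact_mod_cast congrArg Int.cast (Int.toNat_of_nonneg hr0)
      have hdivR : ((M : ℕ) : ℝ) * (((m0 - 1) / (M : ℤ) : ℤ) : ℝ)
          + (((m0 - 1) % (M : ℤ) : ℤ) : ℝ) = (m0 : ℝ) - 1 := by
        exact_mod_cast congrArg Int.cast hdiv
      have hteq : t = (θ / 2 + ((((m0 - 1) % (M : ℤ)).toNat : ℕ) : ℝ) * θ)
          + 2 * π * (((m0 - 1) / (M : ℤ) : ℤ) : ℝ) := by
        rw [hrr]
        linear_combination hedge - θ * hdivR + (((m0 - 1) / (M : ℤ) : ℤ) : ℝ) * hMθ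
      rw [hteq, ptc_periodic]
    · right
      have hεlt : |t - (m0 : ℝ) * θ| < θ / 2 :=
        abs_lt.mpr ⟨lt_of_le_of_ne hε1 (Ne.symm hedge), hε2⟩
      have hdiv := Int.mul_ediv_add_emod m0 (M : ℤ)
      have hr0 : 0 ≤ m0 % (M : ℤ) := Int.emod_nonneg _ (by exact_mod_cast hMpos.ne')
      have hrM : m0 % (M : ℤ) < (M : ℤ) := Int.emod_lt_of_pos _ (by exact_mod_cast hMpos)
      obtain ⟨rn, hrn⟩ : ∃ rn : ℕ, rn = (m0 % (M : ℤ)).toNat := ⟨_, rfl⟩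
      have hrnM : rn < M := by omega
      obtain ⟨b, hbdef⟩ : ∃ b : ℕ, b = rn / P := ⟨_, rfl⟩
      obtain ⟨u, hudef⟩ : ∃ u : ℕ, u = rn % P := ⟨_, rfl⟩
      have hbu : P * b + u = rn := by rw [hbdef, hudef]; exact Nat.div_add_mod rn P
      have hb4 : b < 4 := by
        rw [hbdef]
        exact (Nat.div_lt_iff_lt_mul hPpos).mpr (by omega)
      have huP : u < P := hudef ▸ Nat.mod_lt _ hPpos
      obtain ⟨a, hadef⟩ : ∃ a : ℕ, a = u % 2 := ⟨_, rfl⟩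
      obtain ⟨i, hidef⟩ : ∃ i : ℕ, i = u / 2 + 1 := ⟨_, rfl⟩
      have hu2 : u = 2 * (i - 1) + a := by omega
      have hi1 : 1 ≤ i := by omega
      have hiN : i ≤ Nk := by omega
      refine ⟨a, by omega, b, hb4, ?_⟩
      refine ⟨ptc (2 * ((i : ℝ) - 1) * θ + (t - (m0 : ℝ) * θ)), ?_, ?_⟩
      · exact (hmem _).mpr ⟨i, ⟨hi1, hiN⟩, t - (m0 : ℝ) * θ, hεlt, rfl⟩
      · rw [rotE_ptc]
        have hcoef2 : (u : ℝ) = 2 * ((i : ℝ) - 1) + (a : ℝ) := by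
          have h1 : (u : ℝ) = 2 * ((i : ℕ) - 1 : ℕ) + (a : ℝ) := by exact_mod_cast hu2
          rw [h1, Nat.cast_sub hi1]
          push_cast
          ring
        have hcoef1 : (rn : ℝ) = (P : ℝ) * (b : ℝ) + (u : ℝ) := by exact_mod_cast hbu.symm
        have hcoef3 : (m0 : ℝ) = ((M : ℕ) : ℝ) * ((m0 / (M : ℤ) : ℤ) : ℝ) + (rn : ℝ) := by
          have h1 : (rn : ℝ) = ((m0 % (M : ℤ) : ℤ) : ℝ) := by
            rw [hrn]
            exact_mod_cast congrArg Int.cast (Int.toNat_of_nonneg hr0)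
          rw [h1]
          exact_mod_cast (congrArg Int.cast hdiv).symm
        have hteq : 2 * ((i : ℝ) - 1) * θ + (t - (m0 : ℝ) * θ)
            + ((a : ℝ) * θ + (b : ℝ) * (π / 2))
            = t + (- (2 * π * ((m0 / (M : ℤ) : ℤ) : ℝ))) := by
          linear_combination (-θ) * hcoef3 - ((m0 / (M : ℤ) : ℤ) : ℝ) * hMθ
            - θ * hcoef1 - θ * hcoef2 - (b : ℝ) * hPθ
        rw [hteq]
        have h2π : t + -(2 * π * ((m0 / (M : ℤ) : ℤ) : ℝ))
            = t + 2 * π * ((-(m0 / (M : ℤ)) : ℤ) : ℝ) := by push_cast; ring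
        rw [h2π, ptc_periodic]
  -- assembling the measure bound
  have hEnull : μ (⋃ m ∈ Finset.range M, ({ptc (θ / 2 + (m : ℝ) * θ)} :
      Set (EuclideanSpace ℝ (Fin 2)))) = 0 := by
    refine le_antisymm ?_ zero_le
    refine (measure_biUnion_finset_le _ _).trans ?_
    simp only [null_pt μ hprob hinv]
    simp
  have hsub : Metric.sphere (0 : EuclideanSpace ℝ (Fin 2)) 1 ⊆
      (⋃ m ∈ Finset.range M, ({ptc (θ / 2 + (m : ℝ) * θ)} : Set (EuclideanSpace ℝ (Fin 2)))) ∪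
      (⋃ a ∈ Finset.range 2, ⋃ b ∈ Finset.range 4,
        rotE ((a : ℝ) * θ + (b : ℝ) * (π / 2)) '' C) := by
    intro x hx
    obtain ⟨t, rfl⟩ := sphere_rep hx
    rcases hcover t with ⟨m, hm, heq⟩ | ⟨a, ha, b, hb, hmemb⟩
    · left
      simp only [Set.mem_iUnion, Finset.mem_range, Set.mem_singleton_iff, exists_prop]
      exact ⟨m, hm, heq⟩
    · right
      simp only [Set.mem_iUnion, Finset.mem_range, exists_prop]
      exact ⟨a, ha, b, hb, hmemb⟩
  have hμsphere : (1 : ℝ≥0∞) ≤ μ (Metric.sphere (0 : EuclideanSpace ℝ (Fin 2)) 1) := by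
    have h1 : μ Set.univ ≤ μ (Metric.sphere (0 : EuclideanSpace ℝ (Fin 2)) 1) +
        μ (Metric.sphere (0 : EuclideanSpace ℝ (Fin 2)) 1)ᶜ := by
      conv_lhs => rw [← Set.union_compl_self (Metric.sphere (0 : EuclideanSpace ℝ (Fin 2)) 1)]
      exact measure_union_le _ _
    rw [hsupp, add_zero, measure_univ] at h1
    exact h1
  have hbig : μ (⋃ a ∈ Finset.range 2, ⋃ b ∈ Finset.range 4,
      rotE ((a : ℝ) * θ + (b : ℝ) * (π / 2)) '' C) ≤ 8 * μ C := by
    refine (measure_biUnion_finset_le _ _).trans ?_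
    have h1 : ∀ a ∈ Finset.range 2, μ (⋃ b ∈ Finset.range 4,
        rotE ((a : ℝ) * θ + (b : ℝ) * (π / 2)) '' C) ≤ 4 * μ C := by
      intro a _
      refine (measure_biUnion_finset_le _ _).trans ?_
      have h2 : ∀ b ∈ Finset.range 4,
          μ (rotE ((a : ℝ) * θ + (b : ℝ) * (π / 2)) '' C) = μ C :=
        fun b _ => hrot _
      rw [Finset.sum_congr rfl h2]
      simp [Finset.sum_const, mul_comm]
    calc ∑ a ∈ Finset.range 2, μ (⋃ b ∈ Finset.range 4,
        rotE ((a : ℝ) * θ + (b : ℝ) * (π / 2)) '' C)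
        ≤ ∑ a ∈ Finset.range 2, 4 * μ C := Finset.sum_le_sum h1
      _ = 8 * μ C := by
          simp [Finset.sum_const]
          ring
  have hone : (1 : ℝ≥0∞) ≤ 8 * μ C := by
    calc (1 : ℝ≥0∞) ≤ μ (Metric.sphere (0 : EuclideanSpace ℝ (Fin 2)) 1) := hμsphere
      _ ≤ μ ((⋃ m ∈ Finset.range M, ({ptc (θ / 2 + (m : ℝ) * θ)} :
            Set (EuclideanSpace ℝ (Fin 2)))) ∪
          (⋃ a ∈ Finset.range 2, ⋃ b ∈ Finset.range 4,
            rotE ((a : ℝ) * θ + (b : ℝ) * (π / 2)) '' C)) := measure_mono hsub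
      _ ≤ μ (⋃ m ∈ Finset.range M, ({ptc (θ / 2 + (m : ℝ) * θ)} :
            Set (EuclideanSpace ℝ (Fin 2)))) +
          μ (⋃ a ∈ Finset.range 2, ⋃ b ∈ Finset.range 4,
            rotE ((a : ℝ) * θ + (b : ℝ) * (π / 2)) '' C) := measure_union_le _ _
      _ ≤ 0 + 8 * μ C := add_le_add hEnull.le hbig
      _ = 8 * μ C := by rw [zero_add]
  refine ⟨?_, ?_, ?_⟩
  · rw [ENNReal.div_le_iff (by norm_num) (by norm_num)]
    calc (1 : ℝ≥0∞) ≤ 8 * μ C := hone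
      _ = μ C * 8 := mul_comm _ _
  · intro x hx y hy l _
    have h1 : (2 * (l : ℝ) + 1) * θ = ((2 * l + 1 : ℕ) : ℝ) * θ := by push_cast; ring
    rw [h1]
    exact havoid x hx y hy (2 * l + 1) ⟨l, by ring⟩
  · intro x hx y hy j _
    have h1 : (3 : ℝ) ^ j * θ = ((3 ^ j : ℕ) : ℝ) * θ := by push_cast; ring
    rw [h1]
    exact havoid x hx y hy (3 ^ j) (Odd.pow (⟨1, rfl⟩ : Odd 3))
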